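/- Under the assumptions above, the point Λ* ∈ Im(√𝐖) with ∇F(X*) = −√𝐖 Λ* is a maximizer of the dual problem Λ ↦ −F*(−√𝐖 Λ), and it is the unique maximizer lying in Im(√𝐖). -/

import Mathlib

open Matrix Kronecker Set Filter

section

open scoped ComplexOrder

/-- The square root of a positive semidefinite matrix, as defined in Mathlib (December 2024). -/
noncomputable def Matrix.PosSemidef.sqrt {n 𝕜 : Type*} [Fintype n] [DecidableEq n] [RCLike 𝕜]
    {A : Matrix n n 𝕜} (hA : A.PosSemidef) : Matrix n n 𝕜 :=
  hA.1.eigenvectorUnitary.1 * diagonal ((↑) ∘ (√·) ∘ hA.1.eigenvalues) *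
    (star hA.1.eigenvectorUnitary : Matrix n n 𝕜)

end

section Helpers

variable {E : Type*} [NormedAddCommGroup E] [InnerProductSpace ℝ E] [CompleteSpace E]

local notation "⟪" x ", " y "⟫" => @inner ℝ _ _ x y

private lemma hasGradientAt_const_inner' (y x : E) :
    HasGradientAt (fun z => ⟪y, z⟫) y x := by
  rw [hasGradientAt_iff_hasFDerivAt]
  exact (InnerProductSpace.toDual ℝ E y).hasFDerivAt

private lemma HasGradientAt.sub'' {f g : E → ℝ} {f' g' : E} {x : E}
    (hf : HasGradientAt f f' x) (hg : HasGradientAt g g' x) :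
    HasGradientAt (fun z => f z - g z) (f' - g') x := by
  rw [hasGradientAt_iff_hasFDerivAt] at *
  rw [map_sub]
  exact hf.sub hg

private lemma hasGradientAt_half_sq' (c : ℝ) (x : E) :
    HasGradientAt (fun z => c / 2 * ‖z‖ ^ 2) (c • x) x := by
  rw [hasGradientAt_iff_isLittleO]
  have heq : ∀ x' : E, c / 2 * ‖x'‖ ^ 2 - c / 2 * ‖x‖ ^ 2 - ⟪c • x, x' - x⟫
      = c / 2 * ‖x' - x‖ ^ 2 := by
    intro x'
    rw [real_inner_smul_left, inner_sub_right, real_inner_self_eq_norm_sq,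
      norm_sub_sq_real, real_inner_comm]
    ring
  simp only [heq]
  rw [Asymptotics.isLittleO_iff]
  intro ε hε
  have htend : Tendsto (fun x' : E => ‖x' - x‖) (nhds x) (nhds 0) := by
    have : Tendsto (fun x' : E => x' - x) (nhds x) (nhds (x - x)) :=
      (continuous_id.sub continuous_const).tendsto x
    rw [sub_self] at this
    simpa using this.norm
  have hev := htend.eventually (gt_mem_nhds (show (0:ℝ) < ε / (|c| / 2 + 1) by positivity))
  filter_upwards [hev] with x' hx'
  have h1 : (0:ℝ) ≤ ‖x' - x‖ := norm_nonneg _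
  have h2 : (0:ℝ) < |c| / 2 + 1 := by positivity
  have h3 : |c / 2 * ‖x' - x‖ ^ 2| ≤ |c| / 2 * ‖x' - x‖ * ‖x' - x‖ := by
    rw [abs_mul, abs_div]
    simp [sq_abs, abs_norm, pow_two]
    ring_nf
    nlinarith [abs_nonneg c, norm_nonneg (x' - x)]
  have h4 : |c| / 2 * ‖x' - x‖ ≤ ε := by
    have := hx'.le
    calc |c| / 2 * ‖x' - x‖ ≤ (|c| / 2 + 1) * (ε / (|c| / 2 + 1)) := by nlinarith
    _ = ε := by field_simp
  calc ‖c / 2 * ‖x' - x‖ ^ 2‖ = |c / 2 * ‖x' - x‖ ^ 2| := rfl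
  _ ≤ |c| / 2 * ‖x' - x‖ * ‖x' - x‖ := h3
  _ ≤ ε * ‖x' - x‖ := by nlinarith
  _ = ε * ‖x' - x‖ := rfl

private lemma ConvexOn.inner_grad_le' {f : E → ℝ} (hf : ConvexOn ℝ univ f) {x₀ G : E}
    (hG : HasGradientAt f G x₀) (x : E) : f x₀ + ⟪G, x - x₀⟫ ≤ f x := by
  set v := x - x₀ with hv
  have hline : HasDerivAt (fun t : ℝ => f (x₀ + t • v)) ⟪G, v⟫ 0 := by
    have h1 : HasFDerivAt f (InnerProductSpace.toDual ℝ E G) (x₀ + (0:ℝ) • v) := by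
      simpa using (hasGradientAt_iff_hasFDerivAt.mp hG)
    have h2 : HasDerivAt (fun t : ℝ => x₀ + t • v) v 0 := by
      simpa using ((hasDerivAt_id (0:ℝ)).smul_const v).const_add x₀
    have h3 := h1.comp_hasDerivAt 0 h2
    simp only [InnerProductSpace.toDual_apply_apply] at h3
    exact h3
  have htend : Tendsto (slope (fun t : ℝ => f (x₀ + t • v)) 0) (nhdsWithin 0 (Ioi 0))
      (nhds ⟪G, v⟫) := by
    have := hasDerivAt_iff_tendsto_slope.mp hline
    exact this.mono_left (nhdsWithin_mono _ (fun t ht => ne_of_gt ht))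
  have hbound : ∀ᶠ t in nhdsWithin (0:ℝ) (Ioi 0),
      slope (fun t : ℝ => f (x₀ + t • v)) 0 t ≤ f x - f x₀ := by
    filter_upwards [Ioc_mem_nhdsGT (zero_lt_one : (0:ℝ) < 1)] with t ht
    have ht0 : 0 < t := ht.1
    have ht1 : t ≤ 1 := ht.2
    have hpt : x₀ + t • v = (1 - t) • x₀ + t • x := by
      rw [hv]; rw [smul_sub, sub_smul, one_smul]; abel
    have hcv := hf.2 (mem_univ x₀) (mem_univ x) (by linarith : (0:ℝ) ≤ 1 - t) ht0.le
      (by ring)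
    rw [← hpt] at hcv
    rw [slope_def_field]
    simp only [sub_zero, smul_eq_mul] at hcv ⊢
    rw [div_le_iff₀ ht0]
    simp only [zero_smul, add_zero]
    nlinarith
  have := le_of_tendsto htend hbound
  linarith

private lemma StrongConvexOn.quad_lb' {f : E → ℝ} {m : ℝ} (hf : StrongConvexOn univ m f)
    {x₀ G : E} (hG : HasGradientAt f G x₀) (x : E) :
    f x₀ + ⟪G, x - x₀⟫ + m / 2 * ‖x - x₀‖ ^ 2 ≤ f x := by
  have hconv : ConvexOn ℝ univ (fun z => f z - m / 2 * ‖z‖ ^ 2) :=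
    strongConvexOn_iff_convex.mp hf
  have hg : HasGradientAt (fun z => f z - m / 2 * ‖z‖ ^ 2) (G - m • x₀) x₀ :=
    hG.sub'' (hasGradientAt_half_sq' m x₀)
  have hkey := hconv.inner_grad_le' hg x
  have h1 : ⟪G - m • x₀, x - x₀⟫ = ⟪G, x - x₀⟫ - m * ⟪x₀, x - x₀⟫ := by
    rw [inner_sub_left, real_inner_smul_left]
  have h2 : ‖x - x₀‖ ^ 2 = ‖x‖ ^ 2 - 2 * ⟪x, x₀⟫ + ‖x₀‖ ^ 2 := norm_sub_sq_real x x₀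
  have h3 : ⟪x₀, x - x₀⟫ = ⟪x₀, x⟫ - ‖x₀‖ ^ 2 := by
    rw [inner_sub_right, real_inner_self_eq_norm_sq]
  have h4 : ⟪x, x₀⟫ = ⟪x₀, x⟫ := real_inner_comm _ _
  rw [h1, h3] at hkey
  rw [h2, h4]
  ring_nf
  ring_nf at hkey
  linarith

private lemma IsMaxOn.gradient_eq_zero' {g : E → ℝ} {x₀ G : E}
    (h : IsMaxOn g univ x₀) (hg : HasGradientAt g G x₀) : G = 0 := by
  have hloc : IsLocalMax g x₀ := h.isLocalMax univ_mem
  have hfd := hloc.hasFDerivAt_eq_zero (hasGradientAt_iff_hasFDerivAt.mp hg)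
  have := congrArg (InnerProductSpace.toDual ℝ E).symm hfd
  simpa using this

end Helpers

private lemma euc_norm_sq' {ι : Type*} [Fintype ι] (z : EuclideanSpace ℝ ι) :
    ‖z‖ ^ 2 = ∑ i, (z i) ^ 2 := by
  rw [EuclideanSpace.norm_eq, Real.sq_sqrt (by positivity)]
  simp [sq_abs]

private lemma euc_inner' {ι : Type*} [Fintype ι] (a b : EuclideanSpace ℝ ι) :
    (inner ℝ a b : ℝ) = ∑ i, a i * b i := by
  simp [PiLp.inner_apply, RCLike.inner_apply, conj_trivial]
  exact Finset.sum_congr rfl fun i _ => mul_comm _ _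

private lemma mulVec_inner_symm' {ι : Type*} [Fintype ι] {M : Matrix ι ι ℝ}
    (hM : M.IsHermitian) (u v : EuclideanSpace ℝ ι) :
    (inner (𝕜 := ℝ) (E := EuclideanSpace ℝ ι) (WithLp.toLp 2 (M.mulVec (WithLp.ofLp u))) v)
      = inner (𝕜 := ℝ) (E := EuclideanSpace ℝ ι) u (WithLp.toLp 2 (M.mulVec (WithLp.ofLp v))) := by
  have hsymm : ∀ p q, M p q = M q p := fun p q => by
    conv_lhs => rw [← hM]
    simp [Matrix.conjTranspose_apply]
  simp only [euc_inner', WithLp.ofLp_toLp, Matrix.mulVec, dotProduct, Finset.sum_mul, Finset.mul_sum]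
  rw [Finset.sum_comm]
  refine Finset.sum_congr rfl fun a _ => Finset.sum_congr rfl fun b _ => ?_
  rw [hsymm b a]
  ring

private lemma psd_sqrt_isHermitian' {ι : Type*} [Fintype ι] [DecidableEq ι] {A : Matrix ι ι ℝ}
    (hA : A.PosSemidef) : hA.sqrt.IsHermitian := by
  simp only [Matrix.PosSemidef.sqrt, Matrix.IsHermitian, conjTranspose_mul, Unitary.coe_star,
    star_eq_conjTranspose, conjTranspose_conjTranspose, diagonal_conjTranspose, star_trivial,
    Matrix.mul_assoc]

private lemma psd_sqrt_mul_self' {ι : Type*} [Fintype ι] [DecidableEq ι] {A : Matrix ι ι ℝ}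
    (hA : A.PosSemidef) : hA.sqrt * hA.sqrt = A := by
  have key : ∀ (U' Ust D : Matrix ι ι ℝ), Ust * U' = 1 →
      U' * D * Ust * (U' * D * Ust) = U' * (D * D) * Ust := by
    intro U' Ust D h
    simp only [Matrix.mul_assoc]
    rw [← Matrix.mul_assoc Ust U', h, Matrix.one_mul]
  unfold Matrix.PosSemidef.sqrt
  rw [key _ _ _ (Unitary.coe_star_mul_self _), diagonal_mul_diagonal]
  conv_rhs => rw [hA.1.spectral_theorem, Unitary.conjStarAlgAut_apply]
  congr 2
  congr 1
  funext i
  simp [Real.mul_self_sqrt (hA.eigenvalues_nonneg i)]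

/-- The point `Λ* ∈ Im(√𝐖)` with `∇F(X*) = -√𝐖 Λ*` (where `X* = 1_n ⊗ x*` and
`x*` minimizes `Σᵢ fᵢ`) maximizes the dual function `Λ ↦ -F*(-√𝐖 Λ)`, and it is
the unique maximizer lying in `Im(√𝐖)`. -/
theorem dual_optimum_unique_in_image
    (n d : ℕ) (μ L : ℝ) (hμ : 0 < μ) (hμL : μ ≤ L)
    (W : Matrix (Fin n) (Fin n) ℝ) (hW : W.PosSemidef)
    (hker : LinearMap.ker W.mulVecLin =
      Submodule.span ℝ {(fun _ => (1 : ℝ) : Fin n → ℝ)})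
    (hbW : (W ⊗ₖ (1 : Matrix (Fin d) (Fin d) ℝ)).PosSemidef)
    (f : Fin n → EuclideanSpace ℝ (Fin d) → ℝ)
    (hfdiff : ∀ i, Differentiable ℝ (f i))
    (hfsc : ∀ i, StrongConvexOn Set.univ μ (f i))
    (hfsm : ∀ i, LipschitzWith (Real.toNNReal L) (gradient (f i)))
    (xstar : EuclideanSpace ℝ (Fin d))
    (hxstar : IsMinOn (fun x => ∑ i, f i x) Set.univ xstar)
    (F : EuclideanSpace ℝ (Fin n × Fin d) → ℝ)
    (hF : F = fun X => (1 / (n : ℝ)) * ∑ i, f i (WithLp.toLp 2 (fun k => X (i, k))))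
    (Xstar : EuclideanSpace ℝ (Fin n × Fin d))
    (hXstar : Xstar = WithLp.toLp 2 (fun p => xstar p.2))
    (Λstar : EuclideanSpace ℝ (Fin n × Fin d))
    (hΛmem : Λstar ∈ (Set.range (WithLp.toLp 2 ∘ hbW.sqrt.mulVec) :
      Set (EuclideanSpace ℝ (Fin n × Fin d))))
    (hΛ : gradient F Xstar = -(WithLp.toLp 2 (hbW.sqrt.mulVec (WithLp.ofLp Λstar)))) :
    let Fstar : EuclideanSpace ℝ (Fin n × Fin d) → ℝ :=
      fun y => ⨆ x, ((inner ℝ y x : ℝ) - F x)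
    let D : EuclideanSpace ℝ (Fin n × Fin d) → ℝ :=
      fun Λ => -Fstar (-(WithLp.toLp 2 (hbW.sqrt.mulVec (WithLp.ofLp Λ))))
    IsMaxOn D Set.univ Λstar ∧
      ∀ Λ : EuclideanSpace ℝ (Fin n × Fin d),
        Λ ∈ (Set.range (WithLp.toLp 2 ∘ hbW.sqrt.mulVec) : Set (EuclideanSpace ℝ (Fin n × Fin d))) →
          IsMaxOn D Set.univ Λ → Λ = Λstar := by
  intro Fstar D
  rcases Nat.eq_zero_or_pos n with hn | hn
  · subst hn
    haveI : IsEmpty (Fin 0 × Fin d) := ⟨fun p => p.1.elim0⟩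
    haveI hsub : Subsingleton (EuclideanSpace ℝ (Fin 0 × Fin d)) :=
      ⟨fun a b => PiLp.ext fun p => isEmptyElim p⟩
    constructor
    · intro x _
      have hx : x = Λstar := Subsingleton.elim _ _
      show D x ≤ D Λstar
      rw [hx]
    · intro Λ _ _
      exact Subsingleton.elim _ _
  have hn' : (0:ℝ) < n := Nat.cast_pos.mpr hn
  set m : ℝ := μ / n with hm
  have hm0 : 0 < m := div_pos hμ hn'
  -- coordinate projections, typed into EuclideanSpace
  set Pr : Fin n → EuclideanSpace ℝ (Fin n × Fin d) → EuclideanSpace ℝ (Fin d) :=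
    fun i X => WithLp.toLp 2 (fun k => X (i, k)) with hPrdef
  have hFeq : ∀ X : EuclideanSpace ℝ (Fin n × Fin d),
      F X = (1 / (n : ℝ)) * ∑ i, f i (Pr i X) := by
    intro X
    rw [hF]
  -- strong convexity of F
  have hFsc : StrongConvexOn Set.univ m F := by
    constructor
    · exact convex_univ
    · intro x _ y _ a b ha hb hab
      have key : ∀ i : Fin n,
          f i (Pr i (a • x + b • y)) ≤
            a * f i (Pr i x) + b * f i (Pr i y)
              - a * b * (μ / 2 * ‖Pr i x - Pr i y‖ ^ 2) := by
        intro i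
        have h := (hfsc i).2 (mem_univ (Pr i x)) (mem_univ (Pr i y)) ha hb hab
        have harg : a • Pr i x + b • Pr i y = Pr i (a • x + b • y) := rfl
        rw [harg] at h
        simpa [smul_eq_mul] using h
      have hsum : ∑ i : Fin n, ‖Pr i x - Pr i y‖ ^ 2 = ‖x - y‖ ^ 2 := by
        rw [euc_norm_sq' (x - y), Fintype.sum_prod_type]
        refine Finset.sum_congr rfl fun i _ => ?_
        rw [euc_norm_sq' (Pr i x - Pr i y)]
        rfl
      have hne : (n : ℝ) ≠ 0 := ne_of_gt hn'
      simp only [smul_eq_mul]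
      rw [hFeq, hFeq, hFeq]
      calc (1 / (n:ℝ)) * ∑ i, f i (Pr i (a • x + b • y))
          ≤ (1 / (n:ℝ)) * ∑ i, (a * f i (Pr i x) + b * f i (Pr i y)
              - a * b * (μ / 2 * ‖Pr i x - Pr i y‖ ^ 2)) := by
            apply mul_le_mul_of_nonneg_left (Finset.sum_le_sum fun i _ => key i)
            positivity
        _ = a * ((1 / (n:ℝ)) * ∑ i, f i (Pr i x))
            + b * ((1 / (n:ℝ)) * ∑ i, f i (Pr i y))
            - a * b * (m / 2 * ‖x - y‖ ^ 2) := by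
            have e1 : ∑ i, (a * f i (Pr i x) + b * f i (Pr i y)
                - a * b * (μ / 2 * ‖Pr i x - Pr i y‖ ^ 2))
                = a * (∑ i, f i (Pr i x)) + b * (∑ i, f i (Pr i y))
                  - a * b * (μ / 2) * (∑ i, ‖Pr i x - Pr i y‖ ^ 2) := by
              rw [Finset.sum_sub_distrib, Finset.sum_add_distrib, ← Finset.mul_sum,
                ← Finset.mul_sum]
              congr 1
              rw [← Finset.mul_sum, ← Finset.mul_sum]
              ring
            rw [e1, hsum, hm]
            field_simp
  -- differentiability of F
  have hPdiff : ∀ i : Fin n, Differentiable ℝ (Pr i) := by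
    intro i
    exact (LinearMap.toContinuousLinearMap
      (⟨⟨Pr i, fun _ _ => rfl⟩, fun _ _ => rfl⟩ :
        EuclideanSpace ℝ (Fin n × Fin d) →ₗ[ℝ] EuclideanSpace ℝ (Fin d))).differentiable
  have hFdiff : Differentiable ℝ F := by
    have : Differentiable ℝ (fun X => (1 / (n : ℝ)) * ∑ i, f i (Pr i X)) :=
      Differentiable.const_mul
        (Differentiable.fun_sum fun i _ => (hfdiff i).comp (hPdiff i)) _
    have hfe : F = fun X => (1 / (n : ℝ)) * ∑ i, f i (Pr i X) := funext hFeq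
    rw [hfe]
    exact this
  set G : EuclideanSpace ℝ (Fin n × Fin d) := gradient F Xstar with hG
  have hGrad : HasGradientAt F G Xstar := (hFdiff Xstar).hasGradientAt
  have hquad := fun x => StrongConvexOn.quad_lb' hFsc hGrad x
  -- kernel facts
  have h1mem : ((fun _ => (1:ℝ)) : Fin n → ℝ) ∈ LinearMap.ker W.mulVecLin := by
    rw [hker]; exact Submodule.subset_span rfl
  have hone : W.mulVec (fun _ => (1:ℝ)) = 0 := by
    have := LinearMap.mem_ker.mp h1mem
    simpa [Matrix.mulVecLin_apply] using this
  have hrow : ∀ i, ∑ j, W i j = 0 := by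
    intro i
    have := congrFun hone i
    simpa [Matrix.mulVec, dotProduct] using this
  have hbWX : (W ⊗ₖ (1 : Matrix (Fin d) (Fin d) ℝ)).mulVec (WithLp.ofLp Xstar) = 0 := by
    funext p
    obtain ⟨i, k⟩ := p
    rw [hXstar]
    show ∑ q : Fin n × Fin d,
        (W ⊗ₖ (1 : Matrix (Fin d) (Fin d) ℝ)) (i, k) q * xstar q.2 = 0
    rw [Fintype.sum_prod_type]
    have hline : ∀ j : Fin n,
        ∑ l, (W ⊗ₖ (1 : Matrix (Fin d) (Fin d) ℝ)) (i, k) (j, l) * xstar l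
          = W i j * xstar k := by
      intro j
      simp [Matrix.kroneckerMap_apply, Matrix.one_apply, mul_ite, ite_mul, mul_assoc]
    rw [Finset.sum_congr rfl fun j _ => hline j, ← Finset.sum_mul, hrow, zero_mul]
  have hSsym : (hbW.sqrt).IsHermitian := psd_sqrt_isHermitian' hbW
  have hSX : WithLp.toLp 2 (hbW.sqrt.mulVec (WithLp.ofLp Xstar)) = 0 := by
    have h0 : (inner (𝕜 := ℝ) (E := EuclideanSpace ℝ (Fin n × Fin d))
        (WithLp.toLp 2 (hbW.sqrt.mulVec (WithLp.ofLp Xstar))) (WithLp.toLp 2 (hbW.sqrt.mulVec (WithLp.ofLp Xstar)))) = 0 := by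
      rw [mulVec_inner_symm' hSsym, WithLp.ofLp_toLp, Matrix.mulVec_mulVec, psd_sqrt_mul_self' hbW, hbWX,
        WithLp.toLp_zero]
      exact inner_zero_right _
    exact (inner_self_eq_zero (𝕜 := ℝ)
      (E := EuclideanSpace ℝ (Fin n × Fin d))).mp h0
  have horth : ∀ Λ : EuclideanSpace ℝ (Fin n × Fin d),
      (inner (𝕜 := ℝ) (E := EuclideanSpace ℝ (Fin n × Fin d))
        (WithLp.toLp 2 (hbW.sqrt.mulVec (WithLp.ofLp Λ))) Xstar) = 0 := by
    intro Λ
    rw [mulVec_inner_symm' hSsym, hSX]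
    exact inner_zero_right _
  -- boundedness of the conjugate suprema
  have hbdd : ∀ y : EuclideanSpace ℝ (Fin n × Fin d),
      BddAbove (Set.range fun x => (inner ℝ y x : ℝ) - F x) := by
    intro y
    refine ⟨((inner ℝ y Xstar : ℝ) - F Xstar) + ‖y - G‖ ^ 2 / (2 * m), ?_⟩
    rintro w ⟨x, rfl⟩
    have h1 := hquad x
    have h2 : (inner (𝕜 := ℝ) (E := EuclideanSpace ℝ (Fin n × Fin d))
        (y - G) (x - Xstar) : ℝ) ≤ ‖y - G‖ * ‖x - Xstar‖ := real_inner_le_norm _ _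
    have h3 : (inner (𝕜 := ℝ) (E := EuclideanSpace ℝ (Fin n × Fin d))
        (y - G) (x - Xstar) : ℝ)
        = ((inner ℝ y x : ℝ) - inner ℝ y Xstar) - ((inner ℝ G x : ℝ) - inner ℝ G Xstar) := by
      rw [inner_sub_left, inner_sub_right, inner_sub_right]
    have h4 : (inner ℝ G (x - Xstar) : ℝ) = (inner ℝ G x : ℝ) - inner ℝ G Xstar :=
      inner_sub_right _ _ _
    rw [h4] at h1
    have h6 : ‖y - G‖ * ‖x - Xstar‖
        ≤ m / 2 * ‖x - Xstar‖ ^ 2 + ‖y - G‖ ^ 2 / (2 * m) := by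
      rw [← sub_nonneg]
      have hne2 : (2 * m) ≠ 0 := by positivity
      have expand : m / 2 * ‖x - Xstar‖ ^ 2 + ‖y - G‖ ^ 2 / (2 * m)
          - ‖y - G‖ * ‖x - Xstar‖
          = (m * ‖x - Xstar‖ - ‖y - G‖) ^ 2 / (2 * m) := by
        field_simp
        ring
      rw [expand]
      positivity
    linarith
  have hFstar_ge : ∀ y : EuclideanSpace ℝ (Fin n × Fin d),
      (inner ℝ y Xstar : ℝ) - F Xstar ≤ Fstar y := fun y => le_ciSup (hbdd y) Xstar
  have hFstarG : Fstar G = (inner ℝ G Xstar : ℝ) - F Xstar := by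
    refine le_antisymm (ciSup_le fun x => ?_) (hFstar_ge G)
    have h1 := hquad x
    have h4 : (inner ℝ G (x - Xstar) : ℝ) = (inner ℝ G x : ℝ) - inner ℝ G Xstar :=
      inner_sub_right _ _ _
    rw [h4] at h1
    have hpos : 0 ≤ m / 2 * ‖x - Xstar‖ ^ 2 := by positivity
    linarith
  have hDle : ∀ Λ : EuclideanSpace ℝ (Fin n × Fin d), D Λ ≤ F Xstar := by
    intro Λ
    show -Fstar (-(WithLp.toLp 2 (hbW.sqrt.mulVec (WithLp.ofLp Λ)))) ≤ F Xstar
    have h := hFstar_ge (-(WithLp.toLp 2 (hbW.sqrt.mulVec (WithLp.ofLp Λ))))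
    have hz : (inner (𝕜 := ℝ) (E := EuclideanSpace ℝ (Fin n × Fin d))
        (-(WithLp.toLp 2 (hbW.sqrt.mulVec (WithLp.ofLp Λ)))) Xstar) = 0 := by
      rw [inner_neg_left, horth Λ, neg_zero]
    rw [hz] at h
    linarith
  have hDstar : D Λstar = F Xstar := by
    show -Fstar (-(WithLp.toLp 2 (hbW.sqrt.mulVec (WithLp.ofLp Λstar)))) = F Xstar
    have he : -(WithLp.toLp 2 (hbW.sqrt.mulVec (WithLp.ofLp Λstar))) = G := hΛ.symm
    rw [he, hFstarG]
    have hz : (inner (𝕜 := ℝ) (E := EuclideanSpace ℝ (Fin n × Fin d)) G Xstar) = 0 := by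
      rw [← he, inner_neg_left, horth Λstar, neg_zero]
    rw [hz]
    simp
  constructor
  · intro Λ _
    show D Λ ≤ D Λstar
    rw [hDstar]
    exact hDle Λ
  · intro Λ hmem hmax
    obtain ⟨u, hu⟩ := hmem
    obtain ⟨v, hv⟩ := hΛmem
    set y0 : EuclideanSpace ℝ (Fin n × Fin d) := -(WithLp.toLp 2 (hbW.sqrt.mulVec (WithLp.ofLp Λ))) with hy0
    have h2' : F Xstar ≤ -Fstar y0 := by
      rw [← hDstar]
      exact hmax (mem_univ Λstar)
    have hDΛ : -Fstar y0 = F Xstar := le_antisymm (hDle Λ) h2'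
    have hzΛ : (inner (𝕜 := ℝ) (E := EuclideanSpace ℝ (Fin n × Fin d)) y0 Xstar) = 0 := by
      rw [hy0, inner_neg_left, horth Λ, neg_zero]
    have hFsΛ : Fstar y0
        = (inner (𝕜 := ℝ) (E := EuclideanSpace ℝ (Fin n × Fin d)) y0 Xstar) - F Xstar := by
      rw [hzΛ]
      linarith
    have hmaxg : IsMaxOn (fun x : EuclideanSpace ℝ (Fin n × Fin d) =>
        (inner (𝕜 := ℝ) (E := EuclideanSpace ℝ (Fin n × Fin d)) y0 x) - F x)
        Set.univ Xstar := by
      intro x _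
      simp only [Set.mem_setOf_eq]
      have hle : (inner (𝕜 := ℝ) (E := EuclideanSpace ℝ (Fin n × Fin d)) y0 x) - F x
          ≤ Fstar y0 := le_ciSup (hbdd y0) x
      rw [hFsΛ] at hle
      exact hle
    have hgg : HasGradientAt (fun x : EuclideanSpace ℝ (Fin n × Fin d) =>
        (inner (𝕜 := ℝ) (E := EuclideanSpace ℝ (Fin n × Fin d)) y0 x) - F x)
        (y0 - G) Xstar :=
      (hasGradientAt_const_inner' _ _).sub'' hGrad
    have hz2 := IsMaxOn.gradient_eq_zero' hmaxg hgg
    have h3 : y0 = G := sub_eq_zero.mp hz2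
    have h3' : -(WithLp.toLp 2 (hbW.sqrt.mulVec (WithLp.ofLp Λ))) = -(WithLp.toLp 2 (hbW.sqrt.mulVec (WithLp.ofLp Λstar))) :=
      (hy0.symm.trans h3).trans hΛ
    have hSeq : WithLp.toLp 2 (hbW.sqrt.mulVec (WithLp.ofLp Λ)) = WithLp.toLp 2 (hbW.sqrt.mulVec (WithLp.ofLp Λstar)) := neg_injective h3'
    have hbWuv : (W ⊗ₖ (1 : Matrix (Fin d) (Fin d) ℝ)).mulVec (u - v) = 0 := by
      have h4 : hbW.sqrt.mulVec (hbW.sqrt.mulVec u)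
          = hbW.sqrt.mulVec (hbW.sqrt.mulVec v) := by
        rw [← hu, ← hv] at hSeq
        exact congrArg WithLp.ofLp hSeq
      rw [Matrix.mulVec_mulVec, Matrix.mulVec_mulVec, psd_sqrt_mul_self' hbW] at h4
      rw [Matrix.mulVec_sub, h4, sub_self]
    have hSuv : hbW.sqrt.mulVec (u - v) = 0 := by
      have h0 : (inner (𝕜 := ℝ) (E := EuclideanSpace ℝ (Fin n × Fin d))
          (WithLp.toLp 2 (hbW.sqrt.mulVec (u - v)))
          (WithLp.toLp 2 (hbW.sqrt.mulVec (u - v)))) = 0 := by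
        have hs := mulVec_inner_symm' hSsym (WithLp.toLp 2 (u - v))
          (WithLp.toLp 2 (hbW.sqrt.mulVec (u - v)))
        rw [WithLp.ofLp_toLp, WithLp.ofLp_toLp] at hs
        rw [hs, Matrix.mulVec_mulVec, psd_sqrt_mul_self' hbW, hbWuv, WithLp.toLp_zero]
        exact inner_zero_right _
      have h00 := (inner_self_eq_zero (𝕜 := ℝ)
        (E := EuclideanSpace ℝ (Fin n × Fin d))).mp h0
      have h01 := congrArg WithLp.ofLp h00
      rwa [WithLp.ofLp_toLp, WithLp.ofLp_zero] at h01
    have h5 : hbW.sqrt.mulVec u - hbW.sqrt.mulVec v = 0 := by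
      rw [← Matrix.mulVec_sub]
      exact hSuv
    rw [← hu, ← hv]
    simp only [Function.comp_apply]
    rw [sub_eq_zero.mp h5]
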